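/- Define f(x,y) = h(xy)/(h(x)·y + h(y)·x) for (x,y) ∈ (0,1)². Then for all (x,y) ∈ (0,1)², f(x,y) ≥ 1/(2φ), with equality at (x,y) = (φ,φ). -/

import Mathlib

/-- The binary entropy function (base 2). -/
noncomputable def binEnt (x : ℝ) : ℝ :=
  -(x * Real.logb 2 x) - (1 - x) * Real.logb 2 (1 - x)

open Real Set
set_option maxHeartbeats 1600000

noncomputable def gr : ℝ := (1 + Real.sqrt 5) / 2

lemma sqrt5_gt : 2.236067 < Real.sqrt 5 := by
  rw [show (2.236067:ℝ) = Real.sqrt (2.236067^2) by rw [Real.sqrt_sq]; norm_num]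
  exact Real.sqrt_lt_sqrt (by positivity) (by norm_num)

lemma sqrt5_lt : Real.sqrt 5 < 2.236068 := by
  rw [show (2.236068:ℝ) = Real.sqrt (2.236068^2) by rw [Real.sqrt_sq]; norm_num]
  exact Real.sqrt_lt_sqrt (by norm_num) (by norm_num)

lemma gr_sq : gr^2 = gr + 1 := by
  have h5 : Real.sqrt 5 ^ 2 = 5 := Real.sq_sqrt (by norm_num)
  unfold gr; nlinarith [h5]

lemma gr_gt : 1.618033 < gr := by unfold gr; nlinarith [sqrt5_gt]
lemma gr_lt : gr < 1.618034 := by unfold gr; nlinarith [sqrt5_lt]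
lemma gr_pos : 0 < gr := by nlinarith [gr_gt]

/-- cubic upper bound for log(1+t), valid for all t > -1 -/
lemma log_le_cub {t : ℝ} (ht : -1 < t) : Real.log (1+t) ≤ t - t^2/2 + t^3/3 := by
  have key : ∀ s : ℝ, -1 < s → 0 ≤ s - s^2/2 + s^3/3 - Real.log (1+s) := by
    set f : ℝ → ℝ := fun s => s - s^2/2 + s^3/3 - Real.log (1+s) with hf
    have hd : ∀ s ∈ Ioi (-1:ℝ), HasDerivAt f (s^3/(1+s)) s := by
      intro s hs
      have h1 : (0:ℝ) < 1 + s := by linarith [mem_Ioi.mp hs]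
      have hlog : HasDerivAt (fun y : ℝ => Real.log (1+y)) (1/(1+s)) s := by
        simpa using (((hasDerivAt_id s).const_add 1).log h1.ne')
      have hpoly : HasDerivAt (fun y : ℝ => y - y^2/2 + y^3/3) (1 - s + s^2) s := by
        have := (((hasDerivAt_pow 2 s).div_const 2).const_add 0)
        have h3 := ((hasDerivAt_pow 3 s).div_const 3)
        have h2 := ((hasDerivAt_pow 2 s).div_const 2)
        have := ((hasDerivAt_id s).sub h2).add h3
        refine this.congr_deriv ?_; push_cast; ring
      have := hpoly.sub hlog
      refine this.congr_deriv ?_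
      field_simp
      ring
    have hmono : MonotoneOn f (Ici (0:ℝ)) := by
      apply monotoneOn_of_deriv_nonneg (convex_Ici 0)
      · intro s hs
        exact (hd s (by simp at hs ⊢; linarith)).differentiableAt.continuousAt.continuousWithinAt
      · intro s hs
        rw [interior_Ici] at hs
        exact (hd s (by simp at hs ⊢; linarith)).differentiableAt.differentiableWithinAt
      · intro s hs
        rw [interior_Ici] at hs
        rw [(hd s (by simp at hs ⊢; linarith)).deriv]
        have : (0:ℝ) < s := hs
        positivity
    have hanti : AntitoneOn f (Ioc (-1:ℝ) 0) := by
      apply antitoneOn_of_deriv_nonpos (convex_Ioc (-1) 0)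
      · intro s hs
        exact (hd s (by exact hs.1)).differentiableAt.continuousAt.continuousWithinAt
      · intro s hs
        rw [interior_Ioc] at hs
        exact (hd s hs.1).differentiableAt.differentiableWithinAt
      · intro s hs
        rw [interior_Ioc] at hs
        rw [(hd s hs.1).deriv]
        have h1 : (0:ℝ) < 1 + s := by linarith [hs.1]
        have h2 : s < 0 := hs.2
        have : s^3 ≤ 0 := by nlinarith [sq_nonneg s]
        exact div_nonpos_of_nonpos_of_nonneg this h1.le
    have hf0 : f 0 = 0 := by simp [hf]
    intro s hs
    rcases le_or_gt 0 s with h | h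
    · have := hmono (self_mem_Ici) (mem_Ici.mpr h) h
      rw [hf0] at this; simp only [hf] at this; linarith
    · have := hanti (mem_Ioc.mpr ⟨hs, h.le⟩) (mem_Ioc.mpr ⟨by norm_num, le_refl 0⟩) h.le
      rw [hf0] at this; simp only [hf] at this; linarith
  linarith [key t ht]

/-- quintic upper bound for log(1+t), valid for all t > -1 -/
lemma log_le_quint {t : ℝ} (ht : -1 < t) :
    Real.log (1+t) ≤ t - t^2/2 + t^3/3 - t^4/4 + t^5/5 := by
  have key : ∀ s : ℝ, -1 < s → 0 ≤ s - s^2/2 + s^3/3 - s^4/4 + s^5/5 - Real.log (1+s) := by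
    set f : ℝ → ℝ := fun s => s - s^2/2 + s^3/3 - s^4/4 + s^5/5 - Real.log (1+s) with hf
    have hd : ∀ s ∈ Ioi (-1:ℝ), HasDerivAt f (s^5/(1+s)) s := by
      intro s hs
      have h1 : (0:ℝ) < 1 + s := by linarith [mem_Ioi.mp hs]
      have hlog : HasDerivAt (fun y : ℝ => Real.log (1+y)) (1/(1+s)) s := by
        simpa using (((hasDerivAt_id s).const_add 1).log h1.ne')
      have hpoly : HasDerivAt (fun y : ℝ => y - y^2/2 + y^3/3 - y^4/4 + y^5/5)
          (1 - s + s^2 - s^3 + s^4) s := by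
        have h2 := ((hasDerivAt_pow 2 s).div_const 2)
        have h3 := ((hasDerivAt_pow 3 s).div_const 3)
        have h4 := ((hasDerivAt_pow 4 s).div_const 4)
        have h5 := ((hasDerivAt_pow 5 s).div_const 5)
        have := ((((hasDerivAt_id s).sub h2).add h3).sub h4).add h5
        refine this.congr_deriv ?_; push_cast; ring
      have := hpoly.sub hlog
      refine this.congr_deriv ?_
      field_simp
      ring
    have hmono : MonotoneOn f (Ici (0:ℝ)) := by
      apply monotoneOn_of_deriv_nonneg (convex_Ici 0)
      · intro s hs
        exact (hd s (by simp at hs ⊢; linarith)).differentiableAt.continuousAt.continuousWithinAt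
      · intro s hs
        rw [interior_Ici] at hs
        exact (hd s (by simp at hs ⊢; linarith)).differentiableAt.differentiableWithinAt
      · intro s hs
        rw [interior_Ici] at hs
        rw [(hd s (by simp at hs ⊢; linarith)).deriv]
        have : (0:ℝ) < s := hs
        positivity
    have hanti : AntitoneOn f (Ioc (-1:ℝ) 0) := by
      apply antitoneOn_of_deriv_nonpos (convex_Ioc (-1) 0)
      · intro s hs
        exact (hd s (by exact hs.1)).differentiableAt.continuousAt.continuousWithinAt
      · intro s hs
        rw [interior_Ioc] at hs
        exact (hd s hs.1).differentiableAt.differentiableWithinAt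
      · intro s hs
        rw [interior_Ioc] at hs
        rw [(hd s hs.1).deriv]
        have h1 : (0:ℝ) < 1 + s := by linarith [hs.1]
        have h2 : s < 0 := hs.2
        have : s^5 ≤ 0 := by nlinarith [sq_nonneg s, sq_nonneg (s^2)]
        exact div_nonpos_of_nonpos_of_nonneg this h1.le
    have hf0 : f 0 = 0 := by simp [hf]
    intro s hs
    rcases le_or_gt 0 s with h | h
    · have := hmono (self_mem_Ici) (mem_Ici.mpr h) h
      rw [hf0] at this; simp only [hf] at this; linarith
    · have := hanti (mem_Ioc.mpr ⟨hs, h.le⟩) (mem_Ioc.mpr ⟨by norm_num, le_refl 0⟩) h.le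
      rw [hf0] at this; simp only [hf] at this; linarith
  linarith [key t ht]

/-- quartic lower bound for log(1+t), valid for t ≥ 0 -/
lemma log_ge_quart {t : ℝ} (ht : 0 ≤ t) :
    t - t^2/2 + t^3/3 - t^4/4 ≤ Real.log (1+t) := by
  have key : ∀ s : ℝ, 0 ≤ s → 0 ≤ Real.log (1+s) - (s - s^2/2 + s^3/3 - s^4/4) := by
    set f : ℝ → ℝ := fun s => Real.log (1+s) - (s - s^2/2 + s^3/3 - s^4/4) with hf
    have hd : ∀ s ∈ Ioi (-1:ℝ), HasDerivAt f (s^4/(1+s)) s := by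
      intro s hs
      have h1 : (0:ℝ) < 1 + s := by linarith [mem_Ioi.mp hs]
      have hlog : HasDerivAt (fun y : ℝ => Real.log (1+y)) (1/(1+s)) s := by
        simpa using (((hasDerivAt_id s).const_add 1).log h1.ne')
      have hpoly : HasDerivAt (fun y : ℝ => y - y^2/2 + y^3/3 - y^4/4)
          (1 - s + s^2 - s^3) s := by
        have h2 := ((hasDerivAt_pow 2 s).div_const 2)
        have h3 := ((hasDerivAt_pow 3 s).div_const 3)
        have h4 := ((hasDerivAt_pow 4 s).div_const 4)
        have := (((hasDerivAt_id s).sub h2).add h3).sub h4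
        refine this.congr_deriv ?_; push_cast; ring
      have := hlog.sub hpoly
      refine this.congr_deriv ?_
      field_simp
      ring
    have hmono : MonotoneOn f (Ici (0:ℝ)) := by
      apply monotoneOn_of_deriv_nonneg (convex_Ici 0)
      · intro s hs
        exact (hd s (by simp at hs ⊢; linarith)).differentiableAt.continuousAt.continuousWithinAt
      · intro s hs
        rw [interior_Ici] at hs
        exact (hd s (by simp at hs ⊢; linarith)).differentiableAt.differentiableWithinAt
      · intro s hs
        rw [interior_Ici] at hs
        rw [(hd s (by simp at hs ⊢; linarith)).deriv]
        have : (0:ℝ) < s := hs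
        positivity
    have hf0 : f 0 = 0 := by simp [hf]
    intro s hs
    have := hmono (self_mem_Ici) (mem_Ici.mpr hs) hs
    rw [hf0] at this; simp only [hf] at this; linarith
  linarith [key t ht]

noncomputable def Hn (x : ℝ) : ℝ := -(x * Real.log x) - (1 - x) * Real.log (1 - x)

noncomputable def Gg (u : ℝ) : ℝ := u - (Real.exp u - 1) * Real.log (1 - Real.exp (-u))

lemma exp_neg_mem {u : ℝ} (hu : 0 < u) : Real.exp (-u) < 1 := by
  rw [Real.exp_lt_one_iff]; linarith

lemma hasDerivAt_Gg {u : ℝ} (hu : 0 < u) :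
    HasDerivAt Gg (-(Real.exp u * Real.log (1 - Real.exp (-u)))) u := by
  have hE : Real.exp (-u) < 1 := exp_neg_mem hu
  have hEpos : 0 < Real.exp (-u) := Real.exp_pos _
  have h1 : (0:ℝ) < 1 - Real.exp (-u) := by linarith
  have hinner : HasDerivAt (fun y : ℝ => 1 - Real.exp (-y)) (Real.exp (-u)) u := by
    have : HasDerivAt (fun y : ℝ => Real.exp (-y)) (-Real.exp (-u)) u := by
      exact ((Real.hasDerivAt_exp (-u)).comp u (hasDerivAt_neg u)).congr_deriv (by ring)
    simpa using (this.const_sub 1)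
  have hlog : HasDerivAt (fun y : ℝ => Real.log (1 - Real.exp (-y)))
      (Real.exp (-u) / (1 - Real.exp (-u))) u := hinner.log h1.ne'
  have hexp : HasDerivAt (fun y : ℝ => Real.exp y - 1) (Real.exp u) u := by
    simpa using (Real.hasDerivAt_exp u).sub_const 1
  have hmul := hexp.mul hlog
  have := (hasDerivAt_id u).sub hmul
  refine this.congr_deriv ?_
  have key : (Real.exp u - 1) * Real.exp (-u) = 1 - Real.exp (-u) := by
    rw [sub_mul, ← Real.exp_add]; simp
  field_simp
  nlinarith [key]

lemma hasDerivAt_g1 {u : ℝ} (hu : 0 < u) :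
    HasDerivAt (fun y => -(Real.exp y * Real.log (1 - Real.exp (-y))))
      (-(Real.exp u * (Real.log (1 - Real.exp (-u)) + Real.exp (-u) / (1 - Real.exp (-u))))) u := by
  have hE : Real.exp (-u) < 1 := exp_neg_mem hu
  have h1 : (0:ℝ) < 1 - Real.exp (-u) := by linarith
  have hinner : HasDerivAt (fun y : ℝ => 1 - Real.exp (-y)) (Real.exp (-u)) u := by
    have : HasDerivAt (fun y : ℝ => Real.exp (-y)) (-Real.exp (-u)) u := by
      exact ((Real.hasDerivAt_exp (-u)).comp u (hasDerivAt_neg u)).congr_deriv (by ring)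
    simpa using (this.const_sub 1)
  have hlog : HasDerivAt (fun y : ℝ => Real.log (1 - Real.exp (-y)))
      (Real.exp (-u) / (1 - Real.exp (-u))) u := hinner.log h1.ne'
  have := ((Real.hasDerivAt_exp u).mul hlog).neg
  refine this.congr_deriv ?_
  ring

lemma concaveOn_Gg : ConcaveOn ℝ (Ioi 0) Gg := by
  apply AntitoneOn.concaveOn_of_deriv (convex_Ioi 0)
  · intro u hu
    exact (hasDerivAt_Gg (mem_Ioi.mp hu)).differentiableAt.continuousAt.continuousWithinAt
  · intro u hu
    rw [interior_Ioi] at hu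
    exact (hasDerivAt_Gg (mem_Ioi.mp hu)).differentiableAt.differentiableWithinAt
  · rw [interior_Ioi]
    have hderiv : ∀ u ∈ Ioi (0:ℝ), deriv Gg u = -(Real.exp u * Real.log (1 - Real.exp (-u))) :=
      fun u hu => (hasDerivAt_Gg (mem_Ioi.mp hu)).deriv
    have hanti : AntitoneOn (fun y => -(Real.exp y * Real.log (1 - Real.exp (-y)))) (Ioi 0) := by
      apply antitoneOn_of_deriv_nonpos (convex_Ioi 0)
      · intro u hu
        exact (hasDerivAt_g1 (mem_Ioi.mp hu)).differentiableAt.continuousAt.continuousWithinAt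
      · intro u hu
        rw [interior_Ioi] at hu
        exact (hasDerivAt_g1 (mem_Ioi.mp hu)).differentiableAt.differentiableWithinAt
      · intro u hu
        rw [interior_Ioi] at hu
        rw [(hasDerivAt_g1 (mem_Ioi.mp hu)).deriv]
        have hE : Real.exp (-u) < 1 := exp_neg_mem (mem_Ioi.mp hu)
        have hEpos : 0 < Real.exp (-u) := Real.exp_pos _
        have h1 : (0:ℝ) < 1 - Real.exp (-u) := by linarith
        have hlb : Real.log (1 - Real.exp (-u)) ≥ -(Real.exp (-u) / (1 - Real.exp (-u))) := by
          have := Real.log_le_sub_one_of_pos (x := (1 - Real.exp (-u))⁻¹) (by positivity)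
          rw [Real.log_inv] at this
          have h2 : (1 - Real.exp (-u))⁻¹ - 1 = Real.exp (-u) / (1 - Real.exp (-u)) := by
            field_simp
            ring
          linarith [this, h2.symm.le]
        have : 0 ≤ Real.log (1 - Real.exp (-u)) + Real.exp (-u) / (1 - Real.exp (-u)) := by
          linarith
        have hexp : 0 < Real.exp u := Real.exp_pos u
        nlinarith
    intro a ha b hb hab
    rw [hderiv a ha, hderiv b hb]
    exact hanti ha hb hab

lemma Gg_eq {x : ℝ} (hx0 : 0 < x) (hx1 : x < 1) : Gg (-Real.log x) = Hn x / x := by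
  unfold Gg Hn
  rw [neg_neg, Real.exp_log hx0, Real.exp_neg, Real.exp_log hx0]
  field_simp

lemma Hn_pos {x : ℝ} (hx0 : 0 < x) (hx1 : x < 1) : 0 < Hn x := by
  unfold Hn
  have h1 : Real.log x < 0 := Real.log_neg hx0 hx1
  have h2 : Real.log (1-x) < 0 := Real.log_neg (by linarith) (by linarith)
  nlinarith

lemma key2 {x y : ℝ} (hx0 : 0 < x) (hx1 : x < 1) (hy0 : 0 < y) (hy1 : y < 1) :
    Hn x / x + Hn y / y ≤ 2 * (Hn (Real.sqrt (x*y)) / Real.sqrt (x*y)) := by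
  set m := Real.sqrt (x*y) with hm
  have hm0 : 0 < m := Real.sqrt_pos.mpr (by positivity)
  have hmm : m * m = x * y := Real.mul_self_sqrt (by positivity)
  have hm1 : m < 1 := by nlinarith
  have hu : -Real.log x ∈ Set.Ioi (0:ℝ) := by
    simp only [Set.mem_Ioi]; linarith [Real.log_neg hx0 hx1]
  have hv : -Real.log y ∈ Set.Ioi (0:ℝ) := by
    simp only [Set.mem_Ioi]; linarith [Real.log_neg hy0 hy1]
  have hconc := concaveOn_Gg.2 hu hv (by norm_num : (0:ℝ) ≤ 1/2) (by norm_num : (0:ℝ) ≤ 1/2)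
    (by norm_num)
  simp only [smul_eq_mul] at hconc
  have hlogm : -Real.log m = 1/2 * (-Real.log x) + 1/2 * (-Real.log y) := by
    rw [hm, Real.log_sqrt (by positivity), Real.log_mul hx0.ne' hy0.ne']
    ring
  rw [← hlogm] at hconc
  rw [Gg_eq hx0 hx1, Gg_eq hy0 hy1, Gg_eq hm0 hm1] at hconc
  linarith [hconc]


lemma region18 {x : ℝ} (h1 : 1/32 ≤ x) (h2 : x ≤ 1/4) :
    0 ≤ (2-gr)*x^2*(-Real.log x) + (1-x)*(1-(gr-1)*x)*(-Real.log (1-x))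
      - (1-x^2)*Real.log (1+x) := by
  have hx0 : (0:ℝ) < x := by linarith
  have hx1 : x < 1 := by linarith
  set u : ℝ := 8*x - 1 with hu
  set v : ℝ := (1-8*x)/7 with hv
  set w : ℝ := (8*x-1)/9 with hw
  have hA : 3*(0.6931471803:ℝ) - (u - u^2/2 + u^3/3) ≤ -Real.log x := by
    have hcu := log_le_cub (show (-1:ℝ) < u by rw [hu]; linarith)
    have hlx : Real.log x = Real.log (1/8) + Real.log (1+u) := by
      have e := congrArg Real.log (show x = 1/8 * (1+u) by rw [hu]; ring)
      rwa [Real.log_mul (by norm_num) (by rw [hu]; nlinarith)] at e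
    have hl8 : Real.log (1/8:ℝ) = -(3*Real.log 2) := by
      rw [show (1/8:ℝ) = (2^3)⁻¹ by norm_num, Real.log_inv, Real.log_pow]
      push_cast; ring
    nlinarith [Real.log_two_gt_d9, hcu]
  have hB : (1/7:ℝ) - (1/7)^2/2 + (1/7)^3/3 - (1/7)^4/4 - (v - v^2/2 + v^3/3)
      ≤ -Real.log (1-x) := by
    have hcv := log_le_cub (show (-1:ℝ) < v by rw [hv]; nlinarith)
    have hlx : Real.log (1-x) = Real.log (7/8) + Real.log (1+v) := by
      have e := congrArg Real.log (show 1-x = 7/8 * (1+v) by rw [hv]; ring)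
      rwa [Real.log_mul (by norm_num) (by rw [hv]; nlinarith)] at e
    have hl78 : Real.log (7/8:ℝ) = -Real.log (1+1/7) := by
      rw [show (7/8:ℝ) = (1+1/7:ℝ)⁻¹ by norm_num, Real.log_inv]
    have hq := log_ge_quart (show (0:ℝ) ≤ 1/7 by norm_num)
    nlinarith [hcv, hq]
  have hC : Real.log (1+x) ≤ ((1/8:ℝ) - (1/8)^2/2 + (1/8)^3/3 - (1/8)^4/4 + (1/8)^5/5)
      + (w - w^2/2 + w^3/3) := by
    have hcw := log_le_cub (show (-1:ℝ) < w by rw [hw]; nlinarith)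
    have hlx : Real.log (1+x) = Real.log (9/8) + Real.log (1+w) := by
      have e := congrArg Real.log (show 1+x = 9/8 * (1+w) by rw [hw]; ring)
      rwa [Real.log_mul (by norm_num) (by rw [hw]; nlinarith)] at e
    have hq := log_le_quint (show (-1:ℝ) < 1/8 by norm_num)
    nlinarith [hcw, hq]
  have c1n : (0:ℝ) ≤ (2-gr)*x^2 := by
    have h : (0:ℝ) ≤ 2-gr := by linarith [gr_lt]
    positivity
  have c2n : (0:ℝ) ≤ (1-x)*(1-(gr-1)*x) := by nlinarith [gr_lt, gr_gt]
  have c3n : (0:ℝ) ≤ 1-x^2 := by nlinarith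
  have t1 := mul_le_mul_of_nonneg_left hA c1n
  have t2 := mul_le_mul_of_nonneg_left hB c2n
  have t3 := mul_le_mul_of_nonneg_left hC c3n
  have hpoly : 0 ≤ (2-gr)*x^2*(3*(0.6931471803:ℝ) - (u - u^2/2 + u^3/3))
      + (1-x)*(1-(gr-1)*x)*((1/7:ℝ) - (1/7)^2/2 + (1/7)^3/3 - (1/7)^4/4 - (v - v^2/2 + v^3/3))
      - (1-x^2)*(((1/8:ℝ) - (1/8)^2/2 + (1/8)^3/3 - (1/8)^4/4 + (1/8)^5/5) + (w - w^2/2 + w^3/3)) := by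
    rw [hu, hv, hw]
    nlinarith [gr_gt, gr_lt, mul_nonneg (sub_nonneg.2 h1) (sub_nonneg.2 h2), sq_nonneg (x-1/8),
      mul_nonneg (mul_nonneg (sub_nonneg.2 h1) (sub_nonneg.2 h2)) (sub_nonneg.2 gr_gt.le),
      mul_nonneg (mul_nonneg (sub_nonneg.2 h1) (sub_nonneg.2 h2)) (sub_nonneg.2 gr_lt.le),
      mul_nonneg (mul_nonneg (sub_nonneg.2 h1) (sub_nonneg.2 h1)) (sub_nonneg.2 h2),
      mul_nonneg (mul_nonneg (sub_nonneg.2 h1) (sub_nonneg.2 h2)) (sub_nonneg.2 h2)]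
  linarith [t1, t2, t3, hpoly]


lemma region14 {x : ℝ} (h1 : 1/4 ≤ x) (h2 : x ≤ 2/5) :
    0 ≤ (2-gr)*x^2*(-Real.log x) + (1-x)*(1-(gr-1)*x)*(-Real.log (1-x))
      - (1-x^2)*Real.log (1+x) := by
  have hx0 : (0:ℝ) < x := by linarith
  have hx1 : x < 1 := by linarith
  set u : ℝ := 4*x-1 with hu
  set v : ℝ := (1-4*x)/3 with hv
  set w : ℝ := (4*x-1)/5 with hw
  have hA : (2*(0.6931471803:ℝ)) - (u - u^2/2 + u^3/3) ≤ -Real.log x := by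
    have hcu := log_le_cub (show (-1:ℝ) < u by rw [hu]; linarith)
    have hlx : Real.log x = Real.log (1/4) + Real.log (1+u) := by
      have e := congrArg Real.log (show x = 1/4 * (1+u) by rw [hu]; ring)
      rwa [Real.log_mul (by norm_num) (by rw [hu]; nlinarith)] at e
    have hl4 : Real.log (1/4:ℝ) = -(2*Real.log 2) := by
      rw [show (1/4:ℝ) = (2^2)⁻¹ by norm_num, Real.log_inv, Real.log_pow]
      push_cast; ring
    nlinarith [Real.log_two_gt_d9, hcu]
  have hB : ((1/3:ℝ) - (1/3)^2/2 + (1/3)^3/3 - (1/3)^4/4) - (v - v^2/2 + v^3/3) ≤ -Real.log (1-x) := by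
    have hcv := log_le_cub (show (-1:ℝ) < v by rw [hv]; nlinarith)
    have hlx : Real.log (1-x) = Real.log (3/4) + Real.log (1+v) := by
      have e := congrArg Real.log (show 1-x = 3/4 * (1+v) by rw [hv]; ring)
      rwa [Real.log_mul (by norm_num) (by rw [hv]; nlinarith)] at e
    have hl34 : Real.log (3/4:ℝ) = -Real.log (1+1/3) := by
      rw [show (3/4:ℝ) = (1+1/3:ℝ)⁻¹ by norm_num, Real.log_inv]
    have hq := log_ge_quart (show (0:ℝ) ≤ 1/3 by norm_num)
    nlinarith [hcv, hq]
  have hC : Real.log (1+x) ≤ ((1/4:ℝ) - (1/4)^2/2 + (1/4)^3/3 - (1/4)^4/4 + (1/4)^5/5) + (w - w^2/2 + w^3/3) := by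
    have hcw := log_le_cub (show (-1:ℝ) < w by rw [hw]; nlinarith)
    have hlx : Real.log (1+x) = Real.log (5/4) + Real.log (1+w) := by
      have e := congrArg Real.log (show 1+x = 5/4 * (1+w) by rw [hw]; ring)
      rwa [Real.log_mul (by norm_num) (by rw [hw]; nlinarith)] at e
    have hq := log_le_quint (show (-1:ℝ) < 1/4 by norm_num)
    have hl54 : Real.log (5/4:ℝ) = Real.log (1+1/4) := by norm_num
    nlinarith [hcw, hq]
  have c1n : (0:ℝ) ≤ (2-gr)*x^2 := by
    have h : (0:ℝ) ≤ 2-gr := by linarith [gr_lt]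
    positivity
  have c2n : (0:ℝ) ≤ (1-x)*(1-(gr-1)*x) := by nlinarith [gr_lt, gr_gt]
  have c3n : (0:ℝ) ≤ 1-x^2 := by nlinarith
  have t1 := mul_le_mul_of_nonneg_left hA c1n
  have t2 := mul_le_mul_of_nonneg_left hB c2n
  have t3 := mul_le_mul_of_nonneg_left hC c3n
  have hpoly : 0 ≤ (2-gr)*x^2*((2*(0.6931471803:ℝ)) - (u - u^2/2 + u^3/3))
      + (1-x)*(1-(gr-1)*x)*(((1/3:ℝ) - (1/3)^2/2 + (1/3)^3/3 - (1/3)^4/4) - (v - v^2/2 + v^3/3))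
      - (1-x^2)*(((1/4:ℝ) - (1/4)^2/2 + (1/4)^3/3 - (1/4)^4/4 + (1/4)^5/5) + (w - w^2/2 + w^3/3)) := by
    rw [hu, hv, hw]
    nlinarith [gr_gt, gr_lt, mul_nonneg (sub_nonneg.2 h1) (sub_nonneg.2 h2),
      mul_nonneg (mul_nonneg (sub_nonneg.2 h1) (sub_nonneg.2 h2)) (sub_nonneg.2 gr_gt.le),
      mul_nonneg (mul_nonneg (sub_nonneg.2 h1) (sub_nonneg.2 h2)) (sub_nonneg.2 gr_lt.le),
      mul_nonneg (mul_nonneg (sub_nonneg.2 h1) (sub_nonneg.2 h1)) (sub_nonneg.2 h2),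
      mul_nonneg (mul_nonneg (sub_nonneg.2 h1) (sub_nonneg.2 h2)) (sub_nonneg.2 h2)]
  linarith [t1, t2, t3, hpoly]

lemma region25 {x : ℝ} (h1 : 2/5 ≤ x) (h2 : x ≤ 1/2) :
    0 ≤ (2-gr)*x^2*(-Real.log x) + (1-x)*(1-(gr-1)*x)*(-Real.log (1-x))
      - (1-x^2)*Real.log (1+x) := by
  have hx0 : (0:ℝ) < x := by linarith
  have hx1 : x < 1 := by linarith
  set u : ℝ := (5*x-2)/2 with hu
  set v : ℝ := (2-5*x)/3 with hv
  set w : ℝ := (5*x-2)/7 with hw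
  have hA : ((0.6931471803:ℝ) + ((1/4:ℝ) - (1/4)^2/2 + (1/4)^3/3 - (1/4)^4/4)) - (u - u^2/2 + u^3/3) ≤ -Real.log x := by
    have hcu := log_le_cub (show (-1:ℝ) < u by rw [hu]; linarith)
    have hlx : Real.log x = Real.log (2/5) + Real.log (1+u) := by
      have e := congrArg Real.log (show x = 2/5 * (1+u) by rw [hu]; ring)
      rwa [Real.log_mul (by norm_num) (by rw [hu]; nlinarith)] at e
    have hl25 : Real.log (2/5:ℝ) = -(Real.log 2 + Real.log (1+1/4)) := by
      rw [show (2/5:ℝ) = ((2:ℝ)*(1+1/4))⁻¹ by norm_num, Real.log_inv,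
        Real.log_mul (by norm_num) (by norm_num)]
    have hq := log_ge_quart (show (0:ℝ) ≤ 1/4 by norm_num)
    nlinarith [Real.log_two_gt_d9, hcu, hq]
  have hB : ((0.6931471803:ℝ) - ((1/5:ℝ) - (1/5)^2/2 + (1/5)^3/3 - (1/5)^4/4 + (1/5)^5/5)) - (v - v^2/2 + v^3/3) ≤ -Real.log (1-x) := by
    have hcv := log_le_cub (show (-1:ℝ) < v by rw [hv]; nlinarith)
    have hlx : Real.log (1-x) = Real.log (3/5) + Real.log (1+v) := by
      have e := congrArg Real.log (show 1-x = 3/5 * (1+v) by rw [hv]; ring)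
      rwa [Real.log_mul (by norm_num) (by rw [hv]; nlinarith)] at e
    have hl35 : Real.log (1+1/5:ℝ) = Real.log (3/5) + Real.log 2 := by
      rw [← Real.log_mul (by norm_num) (by norm_num)]
      norm_num
    have hq := log_le_quint (show (-1:ℝ) < 1/5 by norm_num)
    nlinarith [Real.log_two_gt_d9, hcv, hq]
  have hC : Real.log (1+x) ≤ ((2/5:ℝ) - (2/5)^2/2 + (2/5)^3/3 - (2/5)^4/4 + (2/5)^5/5) + (w - w^2/2 + w^3/3) := by
    have hcw := log_le_cub (show (-1:ℝ) < w by rw [hw]; nlinarith)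
    have hlx : Real.log (1+x) = Real.log (7/5) + Real.log (1+w) := by
      have e := congrArg Real.log (show 1+x = 7/5 * (1+w) by rw [hw]; ring)
      rwa [Real.log_mul (by norm_num) (by rw [hw]; nlinarith)] at e
    have hq := log_le_quint (show (-1:ℝ) < 2/5 by norm_num)
    have hl75 : Real.log (7/5:ℝ) = Real.log (1+2/5) := by norm_num
    nlinarith [hcw, hq]
  have c1n : (0:ℝ) ≤ (2-gr)*x^2 := by
    have h : (0:ℝ) ≤ 2-gr := by linarith [gr_lt]
    positivity
  have c2n : (0:ℝ) ≤ (1-x)*(1-(gr-1)*x) := by nlinarith [gr_lt, gr_gt]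
  have c3n : (0:ℝ) ≤ 1-x^2 := by nlinarith
  have t1 := mul_le_mul_of_nonneg_left hA c1n
  have t2 := mul_le_mul_of_nonneg_left hB c2n
  have t3 := mul_le_mul_of_nonneg_left hC c3n
  have hpoly : 0 ≤ (2-gr)*x^2*(((0.6931471803:ℝ) + ((1/4:ℝ) - (1/4)^2/2 + (1/4)^3/3 - (1/4)^4/4)) - (u - u^2/2 + u^3/3))
      + (1-x)*(1-(gr-1)*x)*(((0.6931471803:ℝ) - ((1/5:ℝ) - (1/5)^2/2 + (1/5)^3/3 - (1/5)^4/4 + (1/5)^5/5)) - (v - v^2/2 + v^3/3))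
      - (1-x^2)*(((2/5:ℝ) - (2/5)^2/2 + (2/5)^3/3 - (2/5)^4/4 + (2/5)^5/5) + (w - w^2/2 + w^3/3)) := by
    rw [hu, hv, hw]
    nlinarith [gr_gt, gr_lt, mul_nonneg (sub_nonneg.2 h1) (sub_nonneg.2 h2),
      mul_nonneg (mul_nonneg (sub_nonneg.2 h1) (sub_nonneg.2 h2)) (sub_nonneg.2 gr_gt.le),
      mul_nonneg (mul_nonneg (sub_nonneg.2 h1) (sub_nonneg.2 h2)) (sub_nonneg.2 gr_lt.le),
      mul_nonneg (mul_nonneg (sub_nonneg.2 h1) (sub_nonneg.2 h1)) (sub_nonneg.2 h2),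
      mul_nonneg (mul_nonneg (sub_nonneg.2 h1) (sub_nonneg.2 h2)) (sub_nonneg.2 h2)]
  linarith [t1, t2, t3, hpoly]

lemma region1920 {x : ℝ} (h1 : 9/10 ≤ x) (h2 : x ≤ 511/512) :
    0 ≤ (2-gr)*x^2*(-Real.log x) + (1-x)*(1-(gr-1)*x)*(-Real.log (1-x))
      - (1-x^2)*Real.log (1+x) := by
  have hx0 : (0:ℝ) < x := by linarith
  have hx1 : x < 1 := by linarith
  set u : ℝ := (20*x-19)/19 with hu
  set v : ℝ := 19-20*x with hv
  set w : ℝ := (20*x-19)/39 with hw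
  have hA : ((1/20:ℝ) + (1/20)^2/2 + (1/20)^3/3) - (u - u^2/2 + u^3/3) ≤ -Real.log x := by
    have hcu := log_le_cub (show (-1:ℝ) < u by rw [hu]; nlinarith)
    have hlx : Real.log x = Real.log (19/20) + Real.log (1+u) := by
      have e := congrArg Real.log (show x = 19/20 * (1+u) by rw [hu]; ring)
      rwa [Real.log_mul (by norm_num) (by rw [hu]; nlinarith)] at e
    have hl19 : Real.log (19/20:ℝ) = Real.log (1+(-1/20)) := by norm_num
    have hq := log_le_cub (show (-1:ℝ) < -1/20 by norm_num)
    nlinarith [hcu, hq]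
  have hB : (4*(0.6931471803:ℝ) + ((1/4:ℝ) - (1/4)^2/2 + (1/4)^3/3 - (1/4)^4/4)) - (v - v^2/2 + v^3/3) ≤ -Real.log (1-x) := by
    have hcv := log_le_cub (show (-1:ℝ) < v by rw [hv]; nlinarith)
    have hlx : Real.log (1-x) = Real.log (1/20) + Real.log (1+v) := by
      have e := congrArg Real.log (show 1-x = 1/20 * (1+v) by rw [hv]; ring)
      rwa [Real.log_mul (by norm_num) (by rw [hv]; nlinarith)] at e
    have hl20 : Real.log (1/20:ℝ) = -(4*Real.log 2 + Real.log (1+1/4)) := by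
      rw [show (1/20:ℝ) = ((2:ℝ)^4*(1+1/4))⁻¹ by norm_num, Real.log_inv,
        Real.log_mul (by norm_num) (by norm_num), Real.log_pow]
      push_cast; ring
    have hq := log_ge_quart (show (0:ℝ) ≤ 1/4 by norm_num)
    nlinarith [Real.log_two_gt_d9, hcv, hq]
  have hC : Real.log (1+x) ≤ ((0.6931471808:ℝ) - (1/40 + (1/40)^2/2 + (1/40)^3/3)) + (w - w^2/2 + w^3/3) := by
    have hcw := log_le_cub (show (-1:ℝ) < w by rw [hw]; nlinarith)
    have hlx : Real.log (1+x) = Real.log (39/20) + Real.log (1+w) := by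
      have e := congrArg Real.log (show 1+x = 39/20 * (1+w) by rw [hw]; ring)
      rwa [Real.log_mul (by norm_num) (by rw [hw]; nlinarith)] at e
    have hl39 : Real.log (39/20:ℝ) = Real.log 2 + Real.log (1+(-1/40)) := by
      rw [← Real.log_mul (by norm_num) (by norm_num)]
      norm_num
    have hq := log_le_cub (show (-1:ℝ) < -1/40 by norm_num)
    nlinarith [Real.log_two_lt_d9, hcw, hq]
  have c1n : (0:ℝ) ≤ (2-gr)*x^2 := by
    have h : (0:ℝ) ≤ 2-gr := by linarith [gr_lt]
    positivity
  have c2n : (0:ℝ) ≤ (1-x)*(1-(gr-1)*x) := by nlinarith [gr_lt, gr_gt]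
  have c3n : (0:ℝ) ≤ 1-x^2 := by nlinarith
  have t1 := mul_le_mul_of_nonneg_left hA c1n
  have t2 := mul_le_mul_of_nonneg_left hB c2n
  have t3 := mul_le_mul_of_nonneg_left hC c3n
  have hpoly : 0 ≤ (2-gr)*x^2*(((1/20:ℝ) + (1/20)^2/2 + (1/20)^3/3) - (u - u^2/2 + u^3/3))
      + (1-x)*(1-(gr-1)*x)*((4*(0.6931471803:ℝ) + ((1/4:ℝ) - (1/4)^2/2 + (1/4)^3/3 - (1/4)^4/4)) - (v - v^2/2 + v^3/3))
      - (1-x^2)*(((0.6931471808:ℝ) - (1/40 + (1/40)^2/2 + (1/40)^3/3)) + (w - w^2/2 + w^3/3)) := by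
    rw [hu, hv, hw]
    nlinarith [gr_gt, gr_lt, mul_nonneg (sub_nonneg.2 h1) (sub_nonneg.2 h2),
      mul_nonneg (mul_nonneg (sub_nonneg.2 h1) (sub_nonneg.2 h2)) (sub_nonneg.2 gr_gt.le),
      mul_nonneg (mul_nonneg (sub_nonneg.2 h1) (sub_nonneg.2 h2)) (sub_nonneg.2 gr_lt.le),
      mul_nonneg (mul_nonneg (sub_nonneg.2 h1) (sub_nonneg.2 h1)) (sub_nonneg.2 h2),
      mul_nonneg (mul_nonneg (sub_nonneg.2 h1) (sub_nonneg.2 h2)) (sub_nonneg.2 h2)]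
  linarith [t1, t2, t3, hpoly]

lemma loggr_ge : (0.4811:ℝ) ≤ Real.log gr := by
  have h1 : Real.log (1.618:ℝ) ≤ Real.log gr :=
    Real.log_le_log (by norm_num) (by linarith [gr_gt])
  have h2 : Real.log (1.618:ℝ) = Real.log 2 - Real.log (1+191/809) := by
    rw [show (1.618:ℝ) = 2/(1+191/809) by norm_num,
      Real.log_div (by norm_num) (by norm_num)]
  have h3 := log_le_quint (show (-1:ℝ) < 191/809 by norm_num)
  nlinarith [Real.log_two_gt_d9]

lemma regionPhi {x : ℝ} (h1 : 1/2 ≤ x) (h2 : x ≤ 9/10) :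
    0 ≤ (2-gr)*x^2*(-Real.log x) + (1-x)*(1-(gr-1)*x)*(-Real.log (1-x))
      - (1-x^2)*Real.log (1+x) := by
  have hx0 : (0:ℝ) < x := by linarith
  have hx1 : x < 1 := by linarith
  have hg0 : (0:ℝ) < gr := by linarith [gr_gt]
  have hg1 : (0:ℝ) < gr - 1 := by linarith [gr_gt]
  set lam : ℝ := Real.log gr with hlamdef
  have hlam : (0.4811:ℝ) ≤ lam := loggr_ge
  have hloggr1 : Real.log (gr - 1) = -lam := by
    rw [show gr - 1 = gr⁻¹ by field_simp; linear_combination gr_sq, Real.log_inv, hlamdef]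
  set u : ℝ := gr*x - 1 with hu
  set v : ℝ := gr^2*(1-x) - 1 with hv
  set w : ℝ := (gr-1)*(1+x) - 1 with hw
  have hu1 : (0:ℝ) < 1 + u := by rw [hu]; nlinarith
  have hv1 : (0:ℝ) < 1 + v := by rw [hv]; nlinarith
  have hw1 : (0:ℝ) < 1 + w := by rw [hw]; nlinarith
  have hA : lam - (u - u^2/2 + u^3/3) ≤ -Real.log x := by
    have hcu := log_le_cub (show (-1:ℝ) < u by linarith)
    have hlx : Real.log x = Real.log (gr-1) + Real.log (1+u) := by
      have e := congrArg Real.log (show x = (gr-1) * (1+u) by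
        rw [hu]; linear_combination (-x) * gr_sq)
      rwa [Real.log_mul hg1.ne' hu1.ne'] at e
    rw [hloggr1] at hlx
    linarith
  have hB : 2*lam - (v - v^2/2 + v^3/3) ≤ -Real.log (1-x) := by
    have hcv := log_le_cub (show (-1:ℝ) < v by linarith)
    have hlx : Real.log (1-x) = Real.log ((gr-1)^2) + Real.log (1+v) := by
      have e := congrArg Real.log (show 1-x = (gr-1)^2 * (1+v) by
        rw [hv]; linear_combination (-(1-x)*(gr^2-gr+1)) * gr_sq)
      rwa [Real.log_mul (by positivity) hv1.ne'] at e
    have hsq : Real.log ((gr-1)^2) = -(2*lam) := by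
      rw [Real.log_pow, hloggr1]; push_cast; ring
    rw [hsq] at hlx
    linarith
  have hC : Real.log (1+x) ≤ lam + (w - w^2/2 + w^3/3) := by
    have hcw := log_le_cub (show (-1:ℝ) < w by linarith)
    have hlx : Real.log (1+x) = Real.log gr + Real.log (1+w) := by
      have e := congrArg Real.log (show 1+x = gr * (1+w) by
        rw [hw]; linear_combination (-(1+x)) * gr_sq)
      rwa [Real.log_mul hg0.ne' hw1.ne'] at e
    rw [← hlamdef] at hlx
    linarith
  have c1n : (0:ℝ) ≤ (2-gr)*x^2 := by
    have h : (0:ℝ) ≤ 2-gr := by linarith [gr_lt]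
    positivity
  have c2n : (0:ℝ) ≤ (1-x)*(1-(gr-1)*x) := by nlinarith [gr_lt, gr_gt]
  have c3n : (0:ℝ) ≤ 1-x^2 := by nlinarith
  have t1 := mul_le_mul_of_nonneg_left hA c1n
  have t2 := mul_le_mul_of_nonneg_left hB c2n
  have t3 := mul_le_mul_of_nonneg_left hC c3n
  have hinner : 0 ≤ lam*gr^2 + ((8/3:ℝ) - 11/3*gr + (17/6 + 19/6*gr)*x
      + (-14/3 - 17/6*gr)*x^2 + 2*gr*x^3) := by
    have hmm : (0.4811:ℝ)*gr^2 ≤ lam*gr^2 :=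
      mul_le_mul_of_nonneg_right hlam (sq_nonneg gr)
    nlinarith [gr_gt, gr_lt, hmm, mul_nonneg (sub_nonneg.2 h1) (sub_nonneg.2 h2),
      mul_nonneg (mul_nonneg (sub_nonneg.2 h1) (sub_nonneg.2 h2)) (sub_nonneg.2 gr_gt.le)]
  have hfact : (2-gr)*x^2*(lam - (u - u^2/2 + u^3/3))
      + (1-x)*(1-(gr-1)*x)*(2*lam - (v - v^2/2 + v^3/3))
      - (1-x^2)*(lam + (w - w^2/2 + w^3/3))
      = (x-gr+1)^2 * (lam*gr^2 + ((8/3:ℝ) - 11/3*gr + (17/6 + 19/6*gr)*x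
          + (-14/3 - 17/6*gr)*x^2 + 2*gr*x^3)) := by
    rw [hu, hv, hw]
    linear_combination ((-35/6:ℝ) + (23/6)*gr + (5/6)*gr^2 - (1/3)*gr^3 - (1/3)*gr^4
      + (7/6)*x - (5/2)*x*gr - (3/2)*x*gr^2 + (1/6)*x*gr^3 + (4/3)*x*gr^4 + (1/3)*x*gr^5
      + 6*x^2 - (7/2)*x^2*gr - (5/6)*x^2*gr^2 + (7/6)*x^2*gr^3 - 2*x^2*gr^4 - (4/3)*x^2*gr^5
      + (1/6)*x^3 + (11/3)*x^3*gr + (19/6)*x^3*gr^2 - (7/6)*x^3*gr^3 + (4/3)*x^3*gr^4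
      + 2*x^3*gr^5 - (13/6)*x^4 - (8/3)*x^4*gr - 2*x^4*gr^2 - (1/6)*x^4*gr^3
      - (1/3)*x^4*gr^4 - (4/3)*x^4*gr^5 + (1/3)*x^5 + (2/3)*x^5*gr + (2/3)*x^5*gr^2
      + (1/3)*x^5*gr^3 + (1/3)*x^5*gr^5 - lam + lam*gr - lam*gr^2 + 2*lam*x*gr
      - lam*x^2) * gr_sq
  have hpoly : 0 ≤ (2-gr)*x^2*(lam - (u - u^2/2 + u^3/3))
      + (1-x)*(1-(gr-1)*x)*(2*lam - (v - v^2/2 + v^3/3))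
      - (1-x^2)*(lam + (w - w^2/2 + w^3/3)) := by
    rw [hfact]
    exact mul_nonneg (sq_nonneg _) hinner
  linarith [t1, t2, t3, hpoly]

lemma region0 {x : ℝ} (hx0 : 0 < x) (hx2 : x ≤ 1/32) :
    0 ≤ (2-gr)*x^2*(-Real.log x) + (1-x)*(1-(gr-1)*x)*(-Real.log (1-x))
      - (1-x^2)*Real.log (1+x) := by
  have hx1 : x < 1 := by linarith
  have hA : 5*(0.6931471803:ℝ) ≤ -Real.log x := by
    have h1 : Real.log x ≤ Real.log (1/32) := Real.log_le_log hx0 hx2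
    have h2 : Real.log (1/32 : ℝ) = -(5 * Real.log 2) := by
      rw [show (1/32:ℝ) = (2^5)⁻¹ by norm_num, Real.log_inv, Real.log_pow]
      push_cast; ring
    nlinarith [Real.log_two_gt_d9]
  have hB : Real.log (1-x) ≤ (-x) - (-x)^2/2 + (-x)^3/3 := by
    have := log_le_cub (show (-1:ℝ) < -x by linarith)
    rwa [show (1:ℝ) + -x = 1 - x by ring] at this
  have hC : Real.log (1+x) ≤ x - x^2/2 + x^3/3 := log_le_cub (by linarith)
  have c1n : (0:ℝ) ≤ (2-gr)*x^2 := by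
    have h : (0:ℝ) ≤ 2-gr := by linarith [gr_lt]
    positivity
  have c2n : (0:ℝ) ≤ (1-x)*(1-(gr-1)*x) := by nlinarith [gr_lt, gr_gt]
  have c3n : (0:ℝ) ≤ 1-x^2 := by nlinarith
  have hB' : x + x^2/2 + x^3/3 ≤ -Real.log (1-x) := by nlinarith [hB]
  have t1 := mul_le_mul_of_nonneg_left hA c1n
  have t2 := mul_le_mul_of_nonneg_left hB' c2n
  have t3 := mul_le_mul_of_nonneg_left hC c3n
  have hpoly : 0 ≤ (2-gr)*x^2*(5*(0.6931471803:ℝ))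
      + (1-x)*(1-(gr-1)*x)*(x + x^2/2 + x^3/3) - (1-x^2)*(x - x^2/2 + x^3/3) := by
    nlinarith [gr_gt, gr_lt, mul_nonneg hx0.le hx0.le,
      mul_nonneg (mul_nonneg hx0.le hx0.le) hx0.le,
      mul_nonneg (mul_nonneg hx0.le hx0.le) (sub_nonneg.2 hx2),
      mul_nonneg (mul_nonneg (mul_nonneg hx0.le hx0.le) hx0.le) (sub_nonneg.2 hx2),
      mul_nonneg (mul_nonneg (mul_nonneg hx0.le hx0.le) hx0.le) (sub_nonneg.2 gr_gt.le)]
  linarith [t1, t2, t3, hpoly]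

lemma regionTail {x : ℝ} (h1 : 511/512 ≤ x) (hx1 : x < 1) :
    0 ≤ (2-gr)*x^2*(-Real.log x) + (1-x)*(1-(gr-1)*x)*(-Real.log (1-x))
      - (1-x^2)*Real.log (1+x) := by
  have hx0 : (0:ℝ) < x := by linarith
  have hA : 1 - x ≤ -Real.log x := by
    have := Real.log_le_sub_one_of_pos hx0
    linarith
  have hB : 9*(0.6931471803:ℝ) ≤ -Real.log (1-x) := by
    have hpos : (0:ℝ) < 1 - x := by linarith
    have h1' : Real.log (1-x) ≤ Real.log (1/512) := Real.log_le_log hpos (by linarith)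
    have h2 : Real.log (1/512 : ℝ) = -(9 * Real.log 2) := by
      rw [show (1/512:ℝ) = (2^9)⁻¹ by norm_num, Real.log_inv, Real.log_pow]
      push_cast; ring
    nlinarith [Real.log_two_gt_d9]
  have hC : Real.log (1+x) ≤ (0.6931471808:ℝ) := by
    have h1' : Real.log (1+x) ≤ Real.log 2 := Real.log_le_log (by linarith) (by linarith)
    nlinarith [Real.log_two_lt_d9]
  have c1n : (0:ℝ) ≤ (2-gr)*x^2 := by
    have h : (0:ℝ) ≤ 2-gr := by linarith [gr_lt]
    positivity
  have c2n : (0:ℝ) ≤ (1-x)*(1-(gr-1)*x) := by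
    have h2a : (0:ℝ) ≤ 1-x := by linarith
    have h2b : (0:ℝ) ≤ 1-(gr-1)*x := by nlinarith [gr_lt, gr_gt, hx0, hx1]
    exact mul_nonneg h2a h2b
  have c3n : (0:ℝ) ≤ 1-x^2 := by nlinarith
  have t1 := mul_le_mul_of_nonneg_left hA c1n
  have t2 := mul_le_mul_of_nonneg_left hB c2n
  have t3 := mul_le_mul_of_nonneg_left hC c3n
  have hpoly : 0 ≤ (2-gr)*x^2*(1-x) + (1-x)*(1-(gr-1)*x)*(9*(0.6931471803:ℝ))
      - (1-x^2)*(0.6931471808:ℝ) := by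
    nlinarith [gr_gt, gr_lt, mul_nonneg (sub_nonneg.2 h1) (sub_nonneg.2 hx1.le),
      mul_nonneg (mul_nonneg (sub_nonneg.2 h1) (sub_nonneg.2 hx1.le)) (sub_nonneg.2 gr_gt.le),
      sq_nonneg (1-x)]
  linarith [t1, t2, t3, hpoly]

lemma key1 {m : ℝ} (hm0 : 0 < m) (hm1 : m < 1) : gr * m * Hn m ≤ Hn (m*m) := by
  have hcore : 0 ≤ (2-gr)*m^2*(-Real.log m) + (1-m)*(1-(gr-1)*m)*(-Real.log (1-m))
      - (1-m^2)*Real.log (1+m) := by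
    rcases le_or_gt m (1/32) with h | h
    · exact region0 hm0 h
    rcases le_or_gt m (1/4) with h2 | h2
    · exact region18 h.le h2
    rcases le_or_gt m (2/5) with h3 | h3
    · exact region14 h2.le h3
    rcases le_or_gt m (1/2) with h4 | h4
    · exact region25 h3.le h4
    rcases le_or_gt m (9/10) with h5 | h5
    · exact regionPhi h4.le h5
    rcases le_or_gt m (511/512) with h6 | h6
    · exact region1920 h5.le h6
    · exact regionTail h6.le hm1
  have hsplit : Hn (m*m) - gr * m * Hn m
      = (2-gr)*m^2*(-Real.log m) + (1-m)*(1-(gr-1)*m)*(-Real.log (1-m))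
        - (1-m^2)*Real.log (1+m) := by
    unfold Hn
    rw [Real.log_mul hm0.ne' hm0.ne',
      show (1:ℝ) - m*m = (1-m)*(1+m) by ring,
      Real.log_mul (by linarith : (1:ℝ)-m ≠ 0) (by linarith : (1:ℝ)+m ≠ 0)]
    ring
  linarith

lemma main_ineq {x y : ℝ} (hx0 : 0 < x) (hx1 : x < 1) (hy0 : 0 < y) (hy1 : y < 1) :
    gr/2 * (Hn x * y + Hn y * x) ≤ Hn (x*y) := by
  set m := Real.sqrt (x*y) with hm
  have hm0 : 0 < m := Real.sqrt_pos.mpr (by positivity)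
  have hmm : m * m = x * y := Real.mul_self_sqrt (by positivity)
  have hm1 : m < 1 := by nlinarith
  have h2 := key2 hx0 hx1 hy0 hy1
  rw [← hm] at h2
  have h2' : Hn x * y + Hn y * x ≤ 2 * m * Hn m := by
    have hmul := mul_le_mul_of_nonneg_right h2 (le_of_lt (by positivity : (0:ℝ) < x*y))
    have e1 : (Hn x / x + Hn y / y) * (x*y) = Hn x * y + Hn y * x := by
      field_simp
    have e2 : 2 * (Hn m / m) * (x*y) = 2 * m * Hn m := by
      rw [← hmm]; field_simp
    rw [e1, e2] at hmul
    exact hmul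
  have h1 := key1 hm0 hm1
  rw [hmm] at h1
  nlinarith [gr_pos]

theorem f_min :
    (∀ x ∈ Set.Ioo (0 : ℝ) 1, ∀ y ∈ Set.Ioo (0 : ℝ) 1,
      binEnt (x * y) / (binEnt x * y + binEnt y * x) ≥ 1 / (2 * ((Real.sqrt 5 - 1) / 2))) ∧
    binEnt (((Real.sqrt 5 - 1) / 2) * ((Real.sqrt 5 - 1) / 2)) /
        (binEnt ((Real.sqrt 5 - 1) / 2) * ((Real.sqrt 5 - 1) / 2) +
          binEnt ((Real.sqrt 5 - 1) / 2) * ((Real.sqrt 5 - 1) / 2)) =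
      1 / (2 * ((Real.sqrt 5 - 1) / 2)) := by
  have h5 : Real.sqrt 5 ^ 2 = 5 := Real.sq_sqrt (by norm_num)
  have hs5 : 2.236067 < Real.sqrt 5 := sqrt5_gt
  have hs5' : Real.sqrt 5 < 2.236068 := sqrt5_lt
  have hlog2 : 0 < Real.log 2 := Real.log_pos (by norm_num)
  have hbe : ∀ z : ℝ, binEnt z = Hn z / Real.log 2 := by
    intro z; unfold binEnt Hn Real.logb; ring
  constructor
  · rintro x ⟨hx0, hx1⟩ y ⟨hy0, hy1⟩
    have hxy0 : 0 < x*y := by positivity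
    have hxy1 : x*y < 1 := by nlinarith
    have hDpos : 0 < binEnt x * y + binEnt y * x := by
      rw [hbe x, hbe y]
      have h1 := Hn_pos hx0 hx1
      have h2 := Hn_pos hy0 hy1
      positivity
    rw [ge_iff_le, div_le_div_iff₀ (by nlinarith) hDpos]
    have hmain := main_ineq hx0 hx1 hy0 hy1
    rw [hbe (x*y), hbe x, hbe y]
    rw [div_mul_eq_mul_div, div_mul_eq_mul_div, ← add_div, ← mul_div_assoc,
      div_mul_eq_mul_div, div_le_div_iff₀ hlog2 hlog2]
    have hs5pos : (0:ℝ) < Real.sqrt 5 - 1 := by nlinarith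
    have h6 : (Real.sqrt 5 - 1) * (gr / 2 * (Hn x * y + Hn y * x)) * Real.log 2 ≤
        (Real.sqrt 5 - 1) * Hn (x*y) * Real.log 2 :=
      mul_le_mul_of_nonneg_right (mul_le_mul_of_nonneg_left hmain hs5pos.le) hlog2.le
    have h7 : (Real.sqrt 5 - 1) * (gr / 2 * (Hn x * y + Hn y * x)) = Hn x * y + Hn y * x := by
      unfold gr; linear_combination ((Hn x * y + Hn y * x)/4) * h5
    rw [h7] at h6
    nlinarith [h6]
  · set p : ℝ := (Real.sqrt 5 - 1) / 2 with hp
    have hp0 : 0 < p := by rw [hp]; nlinarith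
    have hp1 : p < 1 := by rw [hp]; nlinarith
    have hpp : p * p = 1 - p := by rw [hp]; nlinarith
    have hsym : binEnt (1 - p) = binEnt p := by
      unfold binEnt
      rw [show (1:ℝ) - (1-p) = p by ring]
      ring
    rw [hpp, hsym]
    have hbp : 0 < binEnt p := by
      rw [hbe p]; exact div_pos (Hn_pos hp0 hp1) hlog2
    field_simp
    ring
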